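/- Let Σ be a real symmetric positive semidefinite N×N matrix with eigenvalues λ₁ ≥ λ₂ ≥ … ≥ λ_N ≥ 0. For every M ≤ N and every real M×N matrix A with orthonormal rows (A Aᵀ = I_M), the determinant of the projected covariance matrix satisfies det(A Σ Aᵀ) ≤ λ₁ · λ₂ · … · λ_M, and equality holds when the rows of A are orthonormal eigenvectors of Σ associated with the M largest eigenvalues. Consequently, for Gaussian data, projecting onto the first M principal axes (the leading principal submatrix of the diagonalized covariance) yields the maximum entropy M-dimensional projection. -/

import Mathlib

open Matrix

section Aux

variable {M N : ℕ}

private lemma det_expand (B : Matrix (Fin M) (Fin N) ℝ) (w : Fin N → ℝ) :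
    (B * diagonal w * Bᵀ).det
      = ∑ r : Fin M → Fin N, (∏ i, (w (r i) * B i (r i))) * (Bᵀ.submatrix r id).det := by
  have hX : B * diagonal w * Bᵀ = Matrix.of (fun i => ∑ k, (w k * B i k) • (Bᵀ k)) := by
    ext i j
    simp [mul_apply, diagonal, Finset.sum_mul, mul_comm, mul_left_comm]
  rw [hX]
  have h := (Matrix.detRowAlternating (R := ℝ) (n := Fin M)).toMultilinearMap.map_sum
    (g := fun (i : Fin M) (k : Fin N) => (w k * B i k) • Bᵀ k)
  rw [show ((Matrix.of fun i => ∑ k, (w k * B i k) • Bᵀ k : Matrix (Fin M) (Fin M) ℝ)).det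
    = (Matrix.detRowAlternating (R := ℝ) (n := Fin M)).toMultilinearMap
      (fun i => ∑ k, (w k * B i k) • Bᵀ k) from rfl, h]
  refine Finset.sum_congr rfl fun r _ => ?_
  rw [(Matrix.detRowAlternating (R := ℝ) (n := Fin M)).toMultilinearMap.map_smul_univ
    (fun i => w (r i) * B i (r i)) (fun i => Bᵀ (r i))]
  rw [smul_eq_mul]
  congr 1

private lemma det_sym (B : Matrix (Fin M) (Fin N) ℝ) (w : Fin N → ℝ) :
    (M.factorial : ℝ) * (B * diagonal w * Bᵀ).det
      = ∑ r : Fin M → Fin N, (∏ i, w (r i)) * (Bᵀ.submatrix r id).det ^ 2 := by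
  have h1 := det_expand B w
  have key : ∀ r : Fin M → Fin N,
      ∑ σ : Equiv.Perm (Fin M),
          (∏ i, (w ((r ∘ σ) i) * B i ((r ∘ σ) i))) * (Bᵀ.submatrix (r ∘ σ) id).det
        = (∏ i, w (r i)) * (Bᵀ.submatrix r id).det ^ 2 := by
    intro r
    have hsub : ∀ σ : Equiv.Perm (Fin M), Bᵀ.submatrix (r ∘ σ) id
        = (Bᵀ.submatrix r id).submatrix σ id := fun σ => rfl
    calc ∑ σ : Equiv.Perm (Fin M),
            (∏ i, (w ((r ∘ σ) i) * B i ((r ∘ σ) i))) * (Bᵀ.submatrix (r ∘ σ) id).det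
        = ∑ σ : Equiv.Perm (Fin M), (∏ i, w (r i)) * (Bᵀ.submatrix r id).det *
            (((Equiv.Perm.sign σ : ℤ) : ℝ) * ∏ i, (Bᵀ.submatrix r id) (σ i) i) := by
          refine Finset.sum_congr rfl fun σ _ => ?_
          rw [hsub σ, Matrix.det_permute, Finset.prod_mul_distrib]
          have hw : (∏ i, w ((r ∘ σ) i)) = ∏ i, w (r i) :=
            Equiv.prod_comp σ (fun i => w (r i))
          rw [hw]
          have hB : (∏ i, B i ((r ∘ σ) i)) = ∏ i, (Bᵀ.submatrix r id) (σ i) i := rfl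
          rw [hB]
          ring
      _ = (∏ i, w (r i)) * (Bᵀ.submatrix r id).det *
            ∑ σ : Equiv.Perm (Fin M),
              (((Equiv.Perm.sign σ : ℤ) : ℝ) * ∏ i, (Bᵀ.submatrix r id) (σ i) i) := by
          rw [Finset.mul_sum]
      _ = (∏ i, w (r i)) * (Bᵀ.submatrix r id).det ^ 2 := by
          rw [← Matrix.det_apply' (Bᵀ.submatrix r id)]
          ring
  calc (M.factorial : ℝ) * (B * diagonal w * Bᵀ).det
      = ∑ _σ : Equiv.Perm (Fin M), (B * diagonal w * Bᵀ).det := by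
        rw [Finset.sum_const, Finset.card_univ, Fintype.card_perm, Fintype.card_fin,
          nsmul_eq_mul]
    _ = ∑ σ : Equiv.Perm (Fin M), ∑ r : Fin M → Fin N,
          (∏ i, (w ((r ∘ σ) i) * B i ((r ∘ σ) i))) * (Bᵀ.submatrix (r ∘ σ) id).det := by
        refine Finset.sum_congr rfl fun σ _ => ?_
        rw [h1]
        exact (Fintype.sum_bijective (fun r : Fin M → Fin N => r ∘ σ)
          ((σ.arrowCongr (Equiv.refl (Fin N))).symm.bijective) _ _ (fun r => rfl)).symm
    _ = ∑ r : Fin M → Fin N, ∑ σ : Equiv.Perm (Fin M),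
          (∏ i, (w ((r ∘ σ) i) * B i ((r ∘ σ) i))) * (Bᵀ.submatrix (r ∘ σ) id).det :=
        Finset.sum_comm
    _ = ∑ r : Fin M → Fin N, (∏ i, w (r i)) * (Bᵀ.submatrix r id).det ^ 2 :=
        Finset.sum_congr rfl fun r _ => key r

private lemma prod_lam_le (hMN : M ≤ N) (lam : Fin N → ℝ)
    (hdec : ∀ i j : Fin N, i ≤ j → lam j ≤ lam i) (hnn : ∀ i, 0 ≤ lam i)
    (r : Fin M → Fin N) (hr : Function.Injective r) :
    ∏ i, lam (r i) ≤ ∏ i : Fin M, lam (Fin.castLE hMN i) := by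
  set T : Finset (Fin N) := Finset.univ.image r with hT
  have hcard : T.card = M := by
    rw [hT, Finset.card_image_of_injective _ hr, Finset.card_univ, Fintype.card_fin]
  set f := T.orderEmbOfFin hcard with hf
  have hmem : ∀ i, f i ∈ T := fun i => T.orderEmbOfFin_mem hcard i
  have h1 : ∏ i, lam (r i) = ∏ x ∈ T, lam x :=
    (Finset.prod_image (fun x _ y _ h => hr h)).symm
  have himg : Finset.univ.image f = T := by
    apply Finset.eq_of_subset_of_card_le
    · intro x hx
      simp only [Finset.mem_image] at hx
      obtain ⟨i, _, rfl⟩ := hx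
      exact hmem i
    · rw [Finset.card_image_of_injective _ f.injective, Finset.card_univ, Fintype.card_fin,
        hcard]
  have h2 : ∏ x ∈ T, lam x = ∏ i, lam (f i) := by
    rw [← himg, Finset.prod_image (fun x _ y _ h => f.injective h)]
  have hle : ∀ i : Fin M, (i : ℕ) ≤ (f i : ℕ) := by
    intro i
    have hc := Finset.card_le_card_of_injOn f
      (fun x hx => by
        simp only [Finset.mem_coe, Finset.mem_Iic] at *
        exact f.le_iff_le.mpr hx)
      (f.injective.injOn) (s := Finset.Iic i) (t := Finset.Iic (f i))
    simpa [Fin.card_Iic] using hc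
  rw [h1, h2]
  refine Finset.prod_le_prod (fun i _ => hnn _) (fun i _ => hdec _ _ ?_)
  exact Fin.le_def.mpr (by simpa using hle i)

end Aux

theorem det_projected_cov_le_prod_top_eigenvalues {N M : ℕ} (hMN : M ≤ N)
    (S : Matrix (Fin N) (Fin N) ℝ) (hS : S.PosSemidef)
    (u : Fin N → Fin N → ℝ) (lam : Fin N → ℝ)
    (horth : ∀ i j, u i ⬝ᵥ u j = if i = j then (1 : ℝ) else 0)
    (heig : ∀ i, S.mulVec (u i) = lam i • u i)
    (hdec : ∀ i j : Fin N, i ≤ j → lam j ≤ lam i) :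
    (∀ A : Matrix (Fin M) (Fin N) ℝ, A * Aᵀ = 1 →
      (A * S * Aᵀ).det ≤ ∏ i : Fin M, lam (Fin.castLE hMN i)) ∧
    ((Matrix.of fun i : Fin M => u (Fin.castLE hMN i)) * S *
        (Matrix.of fun i : Fin M => u (Fin.castLE hMN i))ᵀ).det
      = ∏ i : Fin M, lam (Fin.castLE hMN i) := by
  -- nonnegativity of eigenvalues
  have hnn : ∀ i, 0 ≤ lam i := by
    intro i
    have h0 := hS.dotProduct_mulVec_nonneg (u i)
    have h1 : u i ⬝ᵥ S.mulVec (u i) = lam i := by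
      rw [heig i, dotProduct_smul, smul_eq_mul, horth i i, if_pos rfl, mul_one]
    have h2 : star (u i) = u i := by
      funext k; simp
    rw [h2, h1] at h0
    exact h0
  -- the orthogonal eigenbasis matrix
  set U : Matrix (Fin N) (Fin N) ℝ := Matrix.of u with hU
  have hUUt : U * Uᵀ = 1 := by
    ext i j
    simpa [hU, mul_apply, dotProduct, Matrix.one_apply] using horth i j
  have hUtU : Uᵀ * U = 1 := mul_eq_one_comm.mp hUUt
  have hSUt : S * Uᵀ = Uᵀ * diagonal lam := by
    ext i j
    have h := congrFun (heig j) i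
    simp only [Pi.smul_apply, smul_eq_mul] at h
    have hm : S.mulVec (u j) i = ∑ k, S i k * u j k := by
      simp [mulVec, dotProduct]
    rw [hm] at h
    simp only [mul_apply, transpose_apply, diagonal]
    rw [Finset.sum_congr rfl (fun k _ => rfl)]
    simpa [hU, mul_comm, Matrix.of_apply] using h.trans (by ring)
  have hSdecomp : S = Uᵀ * diagonal lam * U := by
    calc S = S * 1 := by rw [mul_one]
      _ = S * (Uᵀ * U) := by rw [hUtU]
      _ = (S * Uᵀ) * U := by rw [Matrix.mul_assoc]
      _ = Uᵀ * diagonal lam * U := by rw [hSUt]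
  constructor
  · -- the inequality
    intro A hA
    set B : Matrix (Fin M) (Fin N) ℝ := A * Uᵀ with hB
    have hBt : Bᵀ = U * Aᵀ := by rw [hB, transpose_mul, transpose_transpose]
    have hBBt : B * Bᵀ = 1 := by
      rw [hB, hBt, Matrix.mul_assoc, ← Matrix.mul_assoc Uᵀ U Aᵀ, hUtU,
        Matrix.one_mul]
      exact hA
    have hASA : A * S * Aᵀ = B * diagonal lam * Bᵀ := by
      rw [hSdecomp, hB, hBt]; simp only [Matrix.mul_assoc]
    -- the w = 1 instance gives the total mass of the squares
    have hone : ∑ r : Fin M → Fin N, (Bᵀ.submatrix r id).det ^ 2 = (M.factorial : ℝ) := by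
      have h := det_sym B (fun _ => 1)
      simp only [diagonal_one, Finset.prod_const_one, one_mul] at h
      rw [Matrix.mul_one, hBBt, det_one, mul_one] at h
      exact h.symm
    have hmain := det_sym B lam
    have hbound : ∑ r : Fin M → Fin N, (∏ i, lam (r i)) * (Bᵀ.submatrix r id).det ^ 2
        ≤ ∑ r : Fin M → Fin N,
            (∏ i : Fin M, lam (Fin.castLE hMN i)) * (Bᵀ.submatrix r id).det ^ 2 := by
      refine Finset.sum_le_sum fun r _ => ?_
      by_cases hr : Function.Injective r
      · exact mul_le_mul_of_nonneg_right (prod_lam_le hMN lam hdec hnn r hr) (sq_nonneg _)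
      · have : (Bᵀ.submatrix r id).det = 0 := by
          rw [Function.not_injective_iff] at hr
          obtain ⟨i, j, hij, hne⟩ := hr
          refine Matrix.det_zero_of_row_eq hne ?_
          funext k
          simp [Matrix.submatrix_apply, hij]
        rw [this]
        simp
    have hfinal : (M.factorial : ℝ) * (A * S * Aᵀ).det
        ≤ (M.factorial : ℝ) * ∏ i : Fin M, lam (Fin.castLE hMN i) := by
      rw [hASA, hmain]
      calc ∑ r : Fin M → Fin N, (∏ i, lam (r i)) * (Bᵀ.submatrix r id).det ^ 2
          ≤ ∑ r : Fin M → Fin N,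
              (∏ i : Fin M, lam (Fin.castLE hMN i)) * (Bᵀ.submatrix r id).det ^ 2 := hbound
        _ = (∏ i : Fin M, lam (Fin.castLE hMN i)) *
              ∑ r : Fin M → Fin N, (Bᵀ.submatrix r id).det ^ 2 := by
            rw [Finset.mul_sum]
        _ = (M.factorial : ℝ) * ∏ i : Fin M, lam (Fin.castLE hMN i) := by
            rw [hone]; ring
    have hpos : (0 : ℝ) < (M.factorial : ℝ) := by
      exact_mod_cast Nat.factorial_pos M
    exact le_of_mul_le_mul_left hfinal hpos
  · -- the equality case
    have hdiag : (Matrix.of fun i : Fin M => u (Fin.castLE hMN i)) * S *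
        (Matrix.of fun i : Fin M => u (Fin.castLE hMN i))ᵀ
        = diagonal (fun i : Fin M => lam (Fin.castLE hMN i)) := by
      ext i j
      have hmv : ∀ k, S.mulVec (u (Fin.castLE hMN j)) k
          = lam (Fin.castLE hMN j) * u (Fin.castLE hMN j) k := by
        intro k
        have := congrFun (heig (Fin.castLE hMN j)) k
        simpa using this
      have : ((Matrix.of fun i : Fin M => u (Fin.castLE hMN i)) * S *
          (Matrix.of fun i : Fin M => u (Fin.castLE hMN i))ᵀ) i j
          = lam (Fin.castLE hMN j) *
              (u (Fin.castLE hMN i) ⬝ᵥ u (Fin.castLE hMN j)) := by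
        rw [Matrix.mul_assoc]
        simp only [mul_apply, transpose_apply, Matrix.of_apply, dotProduct]
        rw [Finset.mul_sum]
        refine Finset.sum_congr rfl fun k _ => ?_
        have hSA : ∑ l, S k l * u (Fin.castLE hMN j) l
            = lam (Fin.castLE hMN j) * u (Fin.castLE hMN j) k := by
          have := hmv k
          simpa [mulVec, dotProduct] using this
        rw [hSA]; ring
      rw [this, horth]
      by_cases hij : i = j
      · subst hij
        simp [diagonal]
      · have hne : Fin.castLE hMN i ≠ Fin.castLE hMN j := by
          intro h
          exact hij (by
            have := congrArg Fin.val h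
            simpa [Fin.ext_iff] using this)
        simp [diagonal, hij, hne]
    rw [hdiag, det_diagonal]
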